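/- For every Borel set A ⊆ ℝ, the family of Gamma laws (γ_t)_{t>0} satisfies the large deviations bounds −inf_{x ∈ interior(A)} Λ*_V(x) ≤ liminf_{t→0⁺} t·log γ_t(A) ≤ limsup_{t→0⁺} t·log γ_t(A) ≤ −inf_{x ∈ closure(A)} Λ*_V(x), where Λ*_V(x) := 2x/ξ² for x ≥ 0 and Λ*_V(x) := +∞ for x < 0 (with the convention inf ∅ = +∞). -/

import Mathlib

open MeasureTheory Filter Topology

lemma gsl_lam_pos {ξ b : ℝ} (hξ : 0 < ξ) (hb : b < 0)
    (lam : ℝ → ℝ) (hlam : ∀ t, lam t = -2 * b / (ξ ^ 2 * (1 - Real.exp (b * t))))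
    {t : ℝ} (ht : 0 < t) : 0 < lam t := by
  rw [hlam]
  have h1 : Real.exp (b * t) < 1 := by
    rw [Real.exp_lt_one_iff]; exact mul_neg_of_neg_of_pos hb ht
  have h2 : (0:ℝ) < -2 * b := by linarith
  have h4 : 0 < 1 - Real.exp (b * t) := by linarith
  have h3 : 0 < ξ ^ 2 * (1 - Real.exp (b * t)) := mul_pos (by positivity) h4
  exact div_pos h2 h3

lemma gsl_tlam {ξ b : ℝ} (hξ : 0 < ξ) (hb : b < 0)
    (lam : ℝ → ℝ) (hlam : ∀ t, lam t = -2 * b / (ξ ^ 2 * (1 - Real.exp (b * t)))) :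
    Tendsto (fun t => t * lam t) (𝓝[>] (0:ℝ)) (𝓝 (2 / ξ ^ 2)) := by
  have hslope : Tendsto (fun y : ℝ => (Real.exp y - 1) / y) (𝓝[≠] (0:ℝ)) (𝓝 1) := by
    have := Real.hasDerivAt_exp 0
    rw [hasDerivAt_iff_tendsto_slope] at this
    simpa [slope_fun_def_field, Real.exp_zero] using this
  have hbt : Tendsto (fun t : ℝ => b * t) (𝓝[>] (0:ℝ)) (𝓝[≠] (0:ℝ)) := by
    apply tendsto_nhdsWithin_of_tendsto_nhds_of_eventually_within
    · have : Tendsto (fun t : ℝ => b * t) (𝓝 (0:ℝ)) (𝓝 (b * 0)) :=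
        (continuous_const.mul continuous_id).tendsto 0
      simpa using this.mono_left nhdsWithin_le_nhds
    · filter_upwards [self_mem_nhdsWithin] with t (ht : 0 < t)
      exact (mul_neg_of_neg_of_pos hb ht).ne
  have h2 : Tendsto (fun t : ℝ => (Real.exp (b * t) - 1) / (b * t)) (𝓝[>] (0:ℝ)) (𝓝 1) :=
    hslope.comp hbt
  have h3 : Tendsto (fun t : ℝ => (2 / ξ ^ 2) * ((Real.exp (b * t) - 1) / (b * t))⁻¹)
      (𝓝[>] (0:ℝ)) (𝓝 (2 / ξ ^ 2)) := by
    have := tendsto_const_nhds (α := ℝ) (x := 2 / ξ ^ 2) (f := 𝓝[>] (0:ℝ)) |>.mul (h2.inv₀ one_ne_zero)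
    simpa using this
  refine h3.congr' ?_
  filter_upwards [self_mem_nhdsWithin] with t (ht : 0 < t)
  have hbt0 : b * t < 0 := mul_neg_of_neg_of_pos hb ht
  have hexp : Real.exp (b * t) - 1 < 0 := by
    have : Real.exp (b * t) < 1 := Real.exp_lt_one_iff.mpr hbt0
    linarith
  rw [hlam]
  rw [inv_div]
  have hne1 : Real.exp (b * t) - 1 ≠ 0 := ne_of_lt hexp
  have hne2 : (ξ:ℝ) ^ 2 ≠ 0 := by positivity
  have hne3 : 1 - Real.exp (b * t) ≠ 0 := by intro h; apply hne1; linarith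
  field_simp
  ring

lemma gsl_lam_top {ξ b : ℝ} (hξ : 0 < ξ) (hb : b < 0)
    (lam : ℝ → ℝ) (hlam : ∀ t, lam t = -2 * b / (ξ ^ 2 * (1 - Real.exp (b * t)))) :
    Tendsto lam (𝓝[>] (0:ℝ)) atTop := by
  have h1 := gsl_tlam hξ hb lam hlam
  have h2 : Tendsto (fun t : ℝ => (t * lam t) * t⁻¹) (𝓝[>] (0:ℝ)) atTop :=
    h1.pos_mul_atTop (by positivity) tendsto_inv_nhdsGT_zero
  refine (tendsto_congr' ?_).mp h2
  filter_upwards [self_mem_nhdsWithin] with t (ht : 0 < t)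
  field_simp

lemma gsl_tloglam {ξ b : ℝ} (hξ : 0 < ξ) (hb : b < 0)
    (lam : ℝ → ℝ) (hlam : ∀ t, lam t = -2 * b / (ξ ^ 2 * (1 - Real.exp (b * t)))) :
    Tendsto (fun t => t * Real.log (lam t)) (𝓝[>] (0:ℝ)) (𝓝 0) := by
  have h1 := gsl_tlam hξ hb lam hlam
  have hid : Tendsto (fun t : ℝ => t) (𝓝[>] (0:ℝ)) (𝓝 0) :=
    tendsto_id.mono_left nhdsWithin_le_nhds
  have hlog : Tendsto (fun t : ℝ => Real.log (t * lam t)) (𝓝[>] (0:ℝ))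
      (𝓝 (Real.log (2 / ξ ^ 2))) := h1.log (by positivity)
  have h2 : Tendsto (fun t : ℝ => t * Real.log (t * lam t)) (𝓝[>] (0:ℝ)) (𝓝 0) := by
    have := hid.mul hlog
    simpa using this
  have h3 : Tendsto (fun t : ℝ => Real.log t * t) (𝓝[>] (0:ℝ)) (𝓝 0) := by
    have := tendsto_log_mul_rpow_nhdsGT_zero (r := 1) one_pos
    refine this.congr ?_
    intro x; rw [Real.rpow_one]
  have h4 : Tendsto (fun t : ℝ => t * Real.log (t * lam t) - Real.log t * t)
      (𝓝[>] (0:ℝ)) (𝓝 0) := by simpa using h2.sub h3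
  refine h4.congr' ?_
  filter_upwards [self_mem_nhdsWithin] with t (ht : 0 < t)
  have hl : 0 < lam t := gsl_lam_pos hξ hb lam hlam ht
  rw [Real.log_mul (ne_of_gt ht) (ne_of_gt hl)]
  ring

open ProbabilityTheory in
lemma gsl_meas_lower {μl u v : ℝ} (hμ : 1 < μl) {l : ℝ} (hl : 0 < l)
    (hu : 0 < u) (huv : u < v) :
    ENNReal.ofReal (l ^ μl / Real.Gamma μl * u ^ (μl - 1) * Real.exp (-(l * v)) * (v - u))
      ≤ gammaMeasure μl l (Set.Ioo u v) := by
  rw [gammaMeasure, withDensity_apply _ measurableSet_Ioo]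
  have hK : 0 < l ^ μl / Real.Gamma μl := by
    have := Real.Gamma_pos_of_pos (by linarith : (0:ℝ) < μl)
    positivity
  calc ENNReal.ofReal (l ^ μl / Real.Gamma μl * u ^ (μl - 1) * Real.exp (-(l * v)) * (v - u))
      = ENNReal.ofReal (l ^ μl / Real.Gamma μl * u ^ (μl - 1) * Real.exp (-(l * v)))
        * volume (Set.Ioo u v) := by
        rw [Real.volume_Ioo, ← ENNReal.ofReal_mul (by positivity)]
    _ = ∫⁻ _ in Set.Ioo u v,
          ENNReal.ofReal (l ^ μl / Real.Gamma μl * u ^ (μl - 1) * Real.exp (-(l * v))) := by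
        rw [setLIntegral_const]
    _ ≤ ∫⁻ x in Set.Ioo u v, gammaPDF μl l x := by
        refine setLIntegral_mono (measurable_gammaPDFReal μl l).ennreal_ofReal ?_
        intro x hx
        rw [gammaPDF_of_nonneg (le_of_lt (hu.trans hx.1))]
        refine ENNReal.ofReal_le_ofReal ?_
        have h1 : u ^ (μl - 1) ≤ x ^ (μl - 1) :=
          Real.rpow_le_rpow hu.le hx.1.le (by linarith)
        have h2 : Real.exp (-(l * v)) ≤ Real.exp (-(l * x)) := by
          apply Real.exp_le_exp.mpr
          simp only [neg_le_neg_iff]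
          exact mul_le_mul_of_nonneg_left hx.2.le hl.le
        calc l ^ μl / Real.Gamma μl * u ^ (μl - 1) * Real.exp (-(l * v))
            ≤ l ^ μl / Real.Gamma μl * x ^ (μl - 1) * Real.exp (-(l * v)) := by
              apply mul_le_mul_of_nonneg_right _ (Real.exp_pos _).le
              exact mul_le_mul_of_nonneg_left h1 hK.le
          _ ≤ l ^ μl / Real.Gamma μl * x ^ (μl - 1) * Real.exp (-(l * x)) := by
              apply mul_le_mul_of_nonneg_left h2
              have : 0 ≤ x ^ (μl - 1) := Real.rpow_nonneg (hu.trans hx.1).le _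
              positivity

open ProbabilityTheory in
lemma gsl_meas_upper {μl x0 : ℝ} (hμ : 1 < μl) {l : ℝ} (hl : μl < l) (hx0 : 0 ≤ x0) :
    gammaMeasure μl l (Set.Ici x0)
      ≤ ENNReal.ofReal (l ^ μl / Real.Gamma μl * Real.exp (-(l - μl + 1) * x0)) := by
  have hl0 : 0 < l := lt_trans (by linarith) hl
  have hΓ : 0 < Real.Gamma μl := Real.Gamma_pos_of_pos (by linarith)
  have hK : 0 < l ^ μl / Real.Gamma μl := by positivity
  set K : ℝ := l ^ μl / Real.Gamma μl with hKdef
  set C : ℝ := K * Real.exp (-(l - μl + 1) * x0) with hCdef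
  have hC : 0 < C := by positivity
  rw [gammaMeasure, withDensity_apply _ measurableSet_Ici]
  have step1 : ∀ x ∈ Set.Ici x0, gammaPDF μl l x ≤ ENNReal.ofReal (C * Real.exp (x0 - x)) := by
    intro x hx
    have hxx0 : x0 ≤ x := hx
    have hx' : 0 ≤ x := le_trans hx0 hxx0
    rw [gammaPDF_of_nonneg hx']
    refine ENNReal.ofReal_le_ofReal ?_
    have h1 : x ^ (μl - 1) ≤ Real.exp (x * (μl - 1)) := by
      have hxe : x ≤ Real.exp x := by
        have := Real.add_one_le_exp x; linarith
      calc x ^ (μl - 1) ≤ (Real.exp x) ^ (μl - 1) :=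
            Real.rpow_le_rpow hx' hxe (by linarith)
        _ = Real.exp (x * (μl - 1)) := (Real.exp_mul x (μl - 1)).symm
    have h2 : Real.exp (x * (μl - 1)) * Real.exp (-(l * x))
        ≤ Real.exp (-(l - μl + 1) * x0) * Real.exp (x0 - x) := by
      rw [← Real.exp_add, ← Real.exp_add]
      apply Real.exp_le_exp.mpr
      nlinarith [hxx0, hl]
    calc K * x ^ (μl - 1) * Real.exp (-(l * x))
        ≤ K * Real.exp (x * (μl - 1)) * Real.exp (-(l * x)) := by
          apply mul_le_mul_of_nonneg_right _ (Real.exp_pos _).le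
          exact mul_le_mul_of_nonneg_left h1 hK.le
      _ = K * (Real.exp (x * (μl - 1)) * Real.exp (-(l * x))) := by ring
      _ ≤ K * (Real.exp (-(l - μl + 1) * x0) * Real.exp (x0 - x)) :=
          mul_le_mul_of_nonneg_left h2 hK.le
      _ = C * Real.exp (x0 - x) := by rw [hCdef]; ring
  calc ∫⁻ x in Set.Ici x0, gammaPDF μl l x
      ≤ ∫⁻ x in Set.Ici x0, ENNReal.ofReal (C * Real.exp (x0 - x)) := by
        refine setLIntegral_mono ?_ step1
        exact (measurable_const.mul ((measurable_const.sub measurable_id).exp)).ennreal_ofReal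
    _ = ∫⁻ x in Set.Ioi x0, ENNReal.ofReal (C * Real.exp (x0 - x)) := by
        refine setLIntegral_congr ?_
        exact (MeasureTheory.Ioi_ae_eq_Ici (a := x0)).symm
    _ = ENNReal.ofReal (∫ x in Set.Ioi x0, C * Real.exp (x0 - x)) := by
        rw [← MeasureTheory.ofReal_integral_eq_lintegral_ofReal]
        · refine Integrable.const_mul ?_ C
          have : MeasureTheory.IntegrableOn (fun x => Real.exp x0 * Real.exp (-x))
              (Set.Ioi x0) := by
            refine Integrable.const_mul ?_ _
            have := exp_neg_integrableOn_Ioi x0 (b := 1) one_pos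
            simp at this; exact this
          refine this.congr_fun ?_ measurableSet_Ioi
          intro x _
          show Real.exp x0 * Real.exp (-x) = Real.exp (x0 - x)
          rw [← Real.exp_add, sub_eq_add_neg]
        · filter_upwards with x
          positivity
    _ ≤ ENNReal.ofReal C := by
        refine ENNReal.ofReal_le_ofReal ?_
        have : ∫ x in Set.Ioi x0, C * Real.exp (x0 - x)
            = C * Real.exp x0 * ∫ x in Set.Ioi x0, Real.exp (-x) := by
          rw [← integral_const_mul]
          refine setIntegral_congr_fun measurableSet_Ioi ?_
          intro x _
          show C * Real.exp (x0 - x) = C * Real.exp x0 * Real.exp (-x)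
          rw [hCdef, mul_assoc, mul_assoc, mul_assoc, ← Real.exp_add, ← Real.exp_add,
            ← Real.exp_add]
          ring_nf
        rw [this, integral_exp_neg_Ioi, mul_assoc, ← Real.exp_add]
        simp

open ProbabilityTheory in
lemma gsl_upper {ξ b μ : ℝ} (hξ : 0 < ξ) (hb : b < 0) (hμ : 1 < μ)
    (lam : ℝ → ℝ) (hlam : ∀ t, lam t = -2 * b / (ξ ^ 2 * (1 - Real.exp (b * t))))
    (γ : ℝ → Measure ℝ) (hγ : ∀ t, 0 < t → γ t = gammaMeasure μ (lam t))
    (A : Set ℝ) {x0 : ℝ} (hx0 : 0 ≤ x0) (hAsub : ∀ y ∈ A, 0 ≤ y → x0 ≤ y) :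
    limsup (fun t : ℝ => (t : EReal) * ENNReal.log (γ t A)) (𝓝[>] (0 : ℝ))
      ≤ ((-(2 * x0 / ξ ^ 2) : ℝ) : EReal) := by
  have hΓ : 0 < Real.Gamma μ := Real.Gamma_pos_of_pos (by linarith)
  set g : ℝ → ℝ := fun t =>
    μ * (t * Real.log (lam t)) - t * Real.log (Real.Gamma μ)
      - (t * lam t - t * (μ - 1)) * x0 with hgdef
  have htend : Tendsto g (𝓝[>] (0:ℝ)) (𝓝 (-(2 * x0 / ξ ^ 2))) := by
    have hid : Tendsto (fun t : ℝ => t) (𝓝[>] (0:ℝ)) (𝓝 0) :=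
      tendsto_id.mono_left nhdsWithin_le_nhds
    have h1 := gsl_tloglam hξ hb lam hlam
    have h2 := gsl_tlam hξ hb lam hlam
    have := (((tendsto_const_nhds (x := μ)).mul h1).sub
        (hid.mul (tendsto_const_nhds (x := Real.log (Real.Gamma μ))))).sub
        ((h2.sub (hid.mul (tendsto_const_nhds (x := μ - 1)))).mul
          (tendsto_const_nhds (x := x0)))
    convert this using 2
    ring
  have hev : ∀ᶠ t : ℝ in 𝓝[>] (0:ℝ),
      (t : EReal) * ENNReal.log (γ t A) ≤ ((g t : ℝ) : EReal) := by
    filter_upwards [self_mem_nhdsWithin,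
      (gsl_lam_top hξ hb lam hlam).eventually_gt_atTop μ] with t ht hlt
    have ht' : (0:ℝ) < t := ht
    have hl0 : 0 < lam t := gsl_lam_pos hξ hb lam hlam ht'
    set B : ℝ := lam t ^ μ / Real.Gamma μ * Real.exp (-(lam t - μ + 1) * x0) with hBdef
    have hB : 0 < B := by positivity
    have hm : γ t A ≤ ENNReal.ofReal B := by
      rw [hγ t ht']
      have hsub : A ⊆ Set.Iio 0 ∪ Set.Ici x0 := by
        intro y hy
        rcases lt_or_ge y 0 with h | h
        · exact Or.inl h
        · exact Or.inr (hAsub y hy h)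
      calc gammaMeasure μ (lam t) A ≤ gammaMeasure μ (lam t) (Set.Iio 0 ∪ Set.Ici x0) :=
            measure_mono hsub
        _ ≤ gammaMeasure μ (lam t) (Set.Iio 0) + gammaMeasure μ (lam t) (Set.Ici x0) :=
            measure_union_le _ _
        _ = gammaMeasure μ (lam t) (Set.Ici x0) := by
            rw [gammaMeasure, withDensity_apply _ measurableSet_Iio,
              lintegral_gammaPDF_of_nonpos le_rfl, zero_add]
        _ ≤ ENNReal.ofReal B := gsl_meas_upper hμ hlt hx0
    have hlog : ENNReal.log (γ t A) ≤ ((Real.log B : ℝ) : EReal) := by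
      rw [← ENNReal.log_ofReal_of_pos hB]
      exact ENNReal.log_monotone hm
    have hmul : (t : EReal) * ENNReal.log (γ t A) ≤ (t : EReal) * ((Real.log B : ℝ) : EReal) :=
      mul_le_mul_of_nonneg_left hlog (by exact_mod_cast ht'.le)
    have heq : (t : EReal) * ((Real.log B : ℝ) : EReal) = ((g t : ℝ) : EReal) := by
      rw [← EReal.coe_mul]
      congr 1
      rw [hBdef, Real.log_mul (by positivity) (Real.exp_ne_zero _),
        Real.log_div (by positivity) (ne_of_gt hΓ), Real.log_exp, Real.log_rpow hl0, hgdef]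
      ring
    exact hmul.trans_eq heq
  have h1 : limsup (fun t : ℝ => (t : EReal) * ENNReal.log (γ t A)) (𝓝[>] (0:ℝ))
      ≤ limsup (fun t : ℝ => ((g t : ℝ) : EReal)) (𝓝[>] (0:ℝ)) := limsup_le_limsup hev
  have h2 : Tendsto (fun t : ℝ => ((g t : ℝ) : EReal)) (𝓝[>] (0:ℝ))
      (𝓝 ((-(2 * x0 / ξ ^ 2) : ℝ) : EReal)) := EReal.tendsto_coe.mpr htend
  rw [← h2.limsup_eq]
  exact h1

open ProbabilityTheory in
lemma gsl_lower {ξ b μ : ℝ} (hξ : 0 < ξ) (hb : b < 0) (hμ : 1 < μ)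
    (lam : ℝ → ℝ) (hlam : ∀ t, lam t = -2 * b / (ξ ^ 2 * (1 - Real.exp (b * t))))
    (γ : ℝ → Measure ℝ) (hγ : ∀ t, 0 < t → γ t = gammaMeasure μ (lam t))
    (A : Set ℝ) {u v : ℝ} (hu : 0 < u) (huv : u < v) (hsub : Set.Ioo u v ⊆ A) :
    ((-(2 * v / ξ ^ 2) : ℝ) : EReal)
      ≤ liminf (fun t : ℝ => (t : EReal) * ENNReal.log (γ t A)) (𝓝[>] (0 : ℝ)) := by
  have hΓ : 0 < Real.Gamma μ := Real.Gamma_pos_of_pos (by linarith)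
  set g : ℝ → ℝ := fun t =>
    μ * (t * Real.log (lam t))
      + t * ((μ - 1) * Real.log u + Real.log (v - u) - Real.log (Real.Gamma μ))
      - (t * lam t) * v with hgdef
  have htend : Tendsto g (𝓝[>] (0:ℝ)) (𝓝 (-(2 * v / ξ ^ 2))) := by
    have hid : Tendsto (fun t : ℝ => t) (𝓝[>] (0:ℝ)) (𝓝 0) :=
      tendsto_id.mono_left nhdsWithin_le_nhds
    have h1 := gsl_tloglam hξ hb lam hlam
    have h2 := gsl_tlam hξ hb lam hlam
    have := (((tendsto_const_nhds (x := μ)).mul h1).add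
        (hid.mul (tendsto_const_nhds
          (x := (μ - 1) * Real.log u + Real.log (v - u) - Real.log (Real.Gamma μ))))).sub
        (h2.mul (tendsto_const_nhds (x := v)))
    convert this using 2
    ring
  have hev : ∀ᶠ t : ℝ in 𝓝[>] (0:ℝ),
      ((g t : ℝ) : EReal) ≤ (t : EReal) * ENNReal.log (γ t A) := by
    filter_upwards [self_mem_nhdsWithin] with t ht
    have ht' : (0:ℝ) < t := ht
    have hl0 : 0 < lam t := gsl_lam_pos hξ hb lam hlam ht'
    set D : ℝ := lam t ^ μ / Real.Gamma μ * u ^ (μ - 1) * Real.exp (-(lam t * v)) * (v - u)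
      with hDdef
    have hD : 0 < D := by
      have h1 : 0 < u ^ (μ - 1) := Real.rpow_pos_of_pos hu _
      have h2 : 0 < lam t ^ μ := Real.rpow_pos_of_pos hl0 _
      have h3 : 0 < v - u := by linarith
      positivity
    have hm : ENNReal.ofReal D ≤ γ t A := by
      rw [hγ t ht']
      exact (gsl_meas_lower hμ hl0 hu huv).trans (measure_mono hsub)
    have hlog : ((Real.log D : ℝ) : EReal) ≤ ENNReal.log (γ t A) := by
      rw [← ENNReal.log_ofReal_of_pos hD]
      exact ENNReal.log_monotone hm
    have hmul : (t : EReal) * ((Real.log D : ℝ) : EReal) ≤ (t : EReal) * ENNReal.log (γ t A) :=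
      mul_le_mul_of_nonneg_left hlog (by exact_mod_cast ht'.le)
    have heq : (t : EReal) * ((Real.log D : ℝ) : EReal) = ((g t : ℝ) : EReal) := by
      rw [← EReal.coe_mul]
      congr 1
      have h1 : 0 < u ^ (μ - 1) := Real.rpow_pos_of_pos hu _
      have h2 : 0 < lam t ^ μ := Real.rpow_pos_of_pos hl0 _
      have h3 : 0 < v - u := by linarith
      rw [hDdef, Real.log_mul (by positivity) (ne_of_gt h3),
        Real.log_mul (by positivity) (Real.exp_ne_zero _),
        Real.log_mul (by positivity) (ne_of_gt h1),
        Real.log_div (ne_of_gt h2) (ne_of_gt hΓ), Real.log_exp, Real.log_rpow hl0,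
        Real.log_rpow hu, hgdef]
      ring
    exact heq.symm.trans_le hmul
  have h2 : Tendsto (fun t : ℝ => ((g t : ℝ) : EReal)) (𝓝[>] (0:ℝ))
      (𝓝 ((-(2 * v / ξ ^ 2) : ℝ) : EReal)) := EReal.tendsto_coe.mpr htend
  have h1 : liminf (fun t : ℝ => ((g t : ℝ) : EReal)) (𝓝[>] (0:ℝ))
      ≤ liminf (fun t : ℝ => (t : EReal) * ENNReal.log (γ t A)) (𝓝[>] (0:ℝ)) :=
    liminf_le_liminf hev
  rw [← h2.liminf_eq]
  exact h1
/-- Small-time large deviations principle for the Gamma laws `γ_t` (the time-`t`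
marginals of the Feller diffusion started at 0), with the non-strictly-convex rate
function `Λ*_V(x) = 2x/ξ²` for `x ≥ 0` and `+∞` for `x < 0`. -/
theorem gamma_small_time_LDP
    (a ξ b : ℝ) (ha : 0 < a) (hξ : 0 < ξ) (hb : b < 0)
    (μ : ℝ) (hμ_def : μ = 2 * a / ξ ^ 2) (hμ : 1 < μ)
    (lam : ℝ → ℝ) (hlam : ∀ t, lam t = -2 * b / (ξ ^ 2 * (1 - Real.exp (b * t))))
    (γ : ℝ → Measure ℝ)
    (hγ : ∀ t, 0 < t → γ t = ProbabilityTheory.gammaMeasure μ (lam t))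
    (Λstar : ℝ → EReal)
    (hΛstar : ∀ x, Λstar x = if 0 ≤ x then ((2 * x / ξ ^ 2 : ℝ) : EReal) else ⊤)
    (A : Set ℝ) (hA : MeasurableSet A) :
    -(⨅ x ∈ interior A, Λstar x)
        ≤ liminf (fun t : ℝ => (t : EReal) * ENNReal.log (γ t A)) (𝓝[>] (0 : ℝ))
    ∧ liminf (fun t : ℝ => (t : EReal) * ENNReal.log (γ t A)) (𝓝[>] (0 : ℝ))
        ≤ limsup (fun t : ℝ => (t : EReal) * ENNReal.log (γ t A)) (𝓝[>] (0 : ℝ))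
    ∧ limsup (fun t : ℝ => (t : EReal) * ENNReal.log (γ t A)) (𝓝[>] (0 : ℝ))
        ≤ -(⨅ x ∈ closure A, Λstar x) := by
  have hξ2 : (0:ℝ) < ξ ^ 2 := by positivity
  set L := liminf (fun t : ℝ => (t : EReal) * ENNReal.log (γ t A)) (𝓝[>] (0 : ℝ)) with hL
  set U := limsup (fun t : ℝ => (t : EReal) * ENNReal.log (γ t A)) (𝓝[>] (0 : ℝ)) with hU
  refine ⟨?_, ?_, ?_⟩
  · -- lower bound
    rw [EReal.neg_le]
    refine le_iInf₂ fun x hx => ?_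
    rw [hΛstar x]
    by_cases hx0 : 0 ≤ x
    · rw [if_pos hx0]
      have key : ∀ w, x < w → ((-(2 * w / ξ ^ 2) : ℝ) : EReal) ≤ L := by
        intro w hw
        obtain ⟨δ, hδ, hball⟩ := Metric.isOpen_iff.mp isOpen_interior x hx
        set d : ℝ := min δ (w - x) with hd
        have hd0 : 0 < d := lt_min hδ (by linarith)
        have hdδ : d ≤ δ := min_le_left _ _
        have hdw : d ≤ w - x := min_le_right _ _
        have hsub : Set.Ioo (x + d/3) (x + d/2) ⊆ A := by
          intro y hy
          have : y ∈ Metric.ball x δ := by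
            rw [Real.ball_eq_Ioo]
            exact ⟨by cases hy with | intro h1 h2 => linarith,
                   by cases hy with | intro h1 h2 => linarith⟩
          exact interior_subset (hball this)
        have h1 := gsl_lower hξ hb hμ lam hlam γ hγ A
          (by linarith : (0:ℝ) < x + d/3) (by linarith : x + d/3 < x + d/2) hsub
        refine le_trans ?_ h1
        rw [EReal.coe_le_coe_iff]
        have hvw : x + d/2 ≤ w := by linarith
        have : 2 * (x + d/2) / ξ ^ 2 ≤ 2 * w / ξ ^ 2 := by gcongr
        linarith
      rw [EReal.neg_le, ← EReal.coe_neg]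
      by_contra h
      push_neg at h
      obtain ⟨r, hr1, hr2⟩ := EReal.lt_iff_exists_real_btwn.mp h
      have hxr : x < -r * ξ ^ 2 / 2 := by
        have : (2 * x / ξ ^ 2 : ℝ) < -r := by exact_mod_cast EReal.coe_lt_coe_iff.mp (by
          rw [EReal.coe_neg]
          exact EReal.lt_neg_of_lt_neg (by rwa [EReal.coe_neg] at hr2))
        have h2 := (div_lt_iff₀ hξ2).mp this
        linarith
      have := key _ hxr
      have heq : (-(2 * (-r * ξ ^ 2 / 2) / ξ ^ 2) : ℝ) = r := by
        field_simp
      rw [heq] at this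
      exact absurd (lt_of_le_of_lt this hr1) (lt_irrefl _)
    · rw [if_neg hx0]; exact le_top
  · exact liminf_le_limsup
  · -- upper bound
    by_cases hcl : ∃ y ∈ closure A, 0 ≤ y
    · set S : Set ℝ := closure A ∩ Set.Ici 0 with hS
      have hScl : IsClosed S := isClosed_closure.inter isClosed_Ici
      have hSne : S.Nonempty := by
        obtain ⟨y, hy1, hy2⟩ := hcl; exact ⟨y, hy1, hy2⟩
      have hSbd : BddBelow S := ⟨0, fun y hy => hy.2⟩
      set x0 : ℝ := sInf S with hx0def
      have hx0S : x0 ∈ S := hScl.csInf_mem hSne hSbd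
      have hx0 : 0 ≤ x0 := hx0S.2
      have hAsub : ∀ y ∈ A, 0 ≤ y → x0 ≤ y := fun y hy h0 =>
        csInf_le hSbd ⟨subset_closure hy, h0⟩
      have hup := gsl_upper hξ hb hμ lam hlam γ hγ A hx0 hAsub
      refine hup.trans ?_
      have hinf : (⨅ x ∈ closure A, Λstar x) ≤ ((2 * x0 / ξ ^ 2 : ℝ) : EReal) := by
        refine le_trans (iInf₂_le x0 hx0S.1) ?_
        rw [hΛstar x0, if_pos hx0]
      refine EReal.le_neg_of_le_neg ?_
      refine hinf.trans ?_
      rw [← EReal.coe_neg, EReal.coe_le_coe_iff]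
      linarith
    · push_neg at hcl
      have hinf : (⨅ x ∈ closure A, Λstar x) = ⊤ := by
        refine le_antisymm le_top (le_iInf₂ fun x hx => ?_)
        rw [hΛstar x, if_neg (not_le.mpr (hcl x hx))]
      rw [hinf]
      have hbot : ∀ᶠ t : ℝ in 𝓝[>] (0:ℝ),
          (t : EReal) * ENNReal.log (γ t A) ≤ (⊥ : EReal) := by
        filter_upwards [self_mem_nhdsWithin] with t ht
        have ht' : (0:ℝ) < t := ht
        have hγ0 : γ t A = 0 := by
          refine le_antisymm ?_ zero_le
          have hsub : A ⊆ Set.Iio 0 := fun y hy => hcl y (subset_closure hy)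
          calc γ t A ≤ γ t (Set.Iio 0) := measure_mono hsub
            _ = 0 := by
              rw [hγ t ht', ProbabilityTheory.gammaMeasure,
                withDensity_apply _ measurableSet_Iio,
                ProbabilityTheory.lintegral_gammaPDF_of_nonpos le_rfl]
        rw [hγ0, ENNReal.log_zero, EReal.mul_bot_of_pos (by exact_mod_cast ht')]
      have : U ≤ (⊥ : EReal) := limsup_le_of_le (by isBoundedDefault) hbot
      simpa using this
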